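/- Let A be an irreducible tridiagonal (d+1)×(d+1) matrix over a field F, and let A* = diag(θ*_0, ..., θ*_d) with θ*_0 ≠ θ*_i for 1 ≤ i ≤ d. Then A and A* generate the F-algebra Mat_{d+1}(F), and there is no subspace W of F^{d+1} with 0 ≠ W ≠ F^{d+1} that is invariant under both A and A*. -/

import Mathlib

open Matrix Finset in
lemma aux_col {F : Type*} [Field F] {d : ℕ}
    (A : Matrix (Fin (d + 1)) (Fin (d + 1)) F)
    (htri : ∀ i j : Fin (d + 1), 1 < ((i : ℤ) - (j : ℤ)).natAbs → A i j = 0)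
    (hirr : ∀ i j : Fin (d + 1), ((i : ℤ) - (j : ℤ)).natAbs = 1 → A i j ≠ 0)
    (k : ℕ) :
    (∀ j : Fin (d + 1), k < (j : ℕ) → (A ^ k) j 0 = 0) ∧
    (∀ j : Fin (d + 1), (j : ℕ) = k → (A ^ k) j 0 ≠ 0) := by
  induction k with
  | zero =>
    constructor
    · intro j hj
      have hj0 : j ≠ 0 := by
        intro h; subst h; simp at hj
      simp [Matrix.one_apply_ne hj0]
    · intro j hj
      have hj0 : j = 0 := by
        ext; simpa using hj
      subst hj0; simp
  | succ k IH =>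
    have hz : ∀ (hk : k < d + 1) (j : Fin (d + 1)), k + 1 ≤ (j : ℕ) → (A ^ (k+1)) j 0 =
        A j ⟨k, hk⟩ * (A ^ k) ⟨k, hk⟩ 0 := by
      intro hk j hj
      rw [pow_succ', Matrix.mul_apply]
      rw [Finset.sum_eq_single (⟨k, hk⟩ : Fin (d+1))]
      · intro m _ hm
        by_cases hmk : k < (m : ℕ)
        · rw [IH.1 m hmk, mul_zero]
        · have hmk' : (m : ℕ) < k := by
            rcases lt_or_eq_of_le (not_lt.mp hmk) with h | h
            · exact h
            · exact absurd (Fin.ext h : m = ⟨k, hk⟩) hm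
          have : A j m = 0 := by
            apply htri
            have h1 : ((j : ℤ)) = ((j : ℕ) : ℤ) := rfl
            have h2 : ((m : ℤ)) = ((m : ℕ) : ℤ) := rfl
            rw [h1, h2]; omega
          rw [this, zero_mul]
      · intro h; exact absurd (Finset.mem_univ _) h
    constructor
    · intro j hj
      rw [hz (by omega) j (by omega)]
      have : A j ⟨k, by omega⟩ = 0 := by
        apply htri
        show 1 < (((j:ℕ) : ℤ) - ((k : ℤ))).natAbs
        omega
      rw [this, zero_mul]
    · intro j hj
      rw [hz (by have := j.isLt; omega) j (by omega)]
      apply mul_ne_zero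
      · apply hirr
        show ((((j:ℕ)) : ℤ) - ((k : ℤ))).natAbs = 1
        omega
      · exact IH.2 _ rfl

theorem stmt_3 {F : Type*} [Field F] {d : ℕ}
    (A : Matrix (Fin (d + 1)) (Fin (d + 1)) F)
    (htri : ∀ i j : Fin (d + 1), 1 < ((i : ℤ) - (j : ℤ)).natAbs → A i j = 0)
    (hirr : ∀ i j : Fin (d + 1), ((i : ℤ) - (j : ℤ)).natAbs = 1 → A i j ≠ 0)
    (θ : Fin (d + 1) → F)
    (hθ : ∀ i : Fin (d + 1), i ≠ 0 → θ 0 ≠ θ i) :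
    Algebra.adjoin F ({A, Matrix.diagonal θ} : Set (Matrix (Fin (d + 1)) (Fin (d + 1)) F)) = ⊤ ∧
    ¬ ∃ W : Submodule F (Fin (d + 1) → F), W ≠ ⊥ ∧ W ≠ ⊤ ∧
        (∀ v ∈ W, A.mulVec v ∈ W) ∧ (∀ v ∈ W, (Matrix.diagonal θ).mulVec v ∈ W) := by
  classical
  set S := Algebra.adjoin F ({A, Matrix.diagonal θ} : Set (Matrix (Fin (d + 1)) (Fin (d + 1)) F))
    with hS
  have hAS : A ∈ S := Algebra.subset_adjoin (by simp)
  have hDS : Matrix.diagonal θ ∈ S := Algebra.subset_adjoin (by simp)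
  -- E_{00} ∈ S
  have hdiagprod : ∀ s : Finset (Fin (d+1)),
      Matrix.diagonal (fun j => ∏ i ∈ s, (θ j - θ i)) ∈ S := by
    intro s
    induction s using Finset.induction_on with
    | empty => simpa using S.one_mem
    | insert i s hnotmem ih =>
      have hfun : (fun j => ∏ m ∈ insert i s, (θ j - θ m)) =
          fun j => (θ j - θ i) * ∏ m ∈ s, (θ j - θ m) :=
        funext fun j => Finset.prod_insert hnotmem
      have : Matrix.diagonal (fun j => ∏ m ∈ insert i s, (θ j - θ m)) =
          Matrix.diagonal (fun j => θ j - θ i) *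
          Matrix.diagonal (fun j => ∏ m ∈ s, (θ j - θ m)) := by
        rw [hfun, ← Matrix.diagonal_mul_diagonal]
      rw [this]
      apply mul_mem _ ih
      have hfac : Matrix.diagonal (fun j : Fin (d+1) => θ j - θ i) =
          Matrix.diagonal θ - Matrix.diagonal (fun _ => θ i) := by
        rw [Matrix.diagonal_sub]
      rw [hfac]
      apply sub_mem hDS
      have : Matrix.diagonal (fun _ : Fin (d+1) => θ i) = algebraMap F _ (θ i) := by
        ext a b
        simp [Matrix.algebraMap_matrix_apply, Matrix.diagonal_apply]
      rw [this]
      exact S.algebraMap_mem _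
  have hE : Matrix.single (0 : Fin (d+1)) 0 (1 : F) ∈ S := by
    set t : Finset (Fin (d + 1)) := Finset.univ.erase 0 with ht
    set c : F := ∏ i ∈ t, (θ 0 - θ i) with hc
    have hcne : c ≠ 0 := by
      apply Finset.prod_ne_zero_iff.mpr
      intro i hi
      exact sub_ne_zero.mpr (hθ i (Finset.mem_erase.mp hi).1)
    have key : Matrix.single (0 : Fin (d+1)) 0 (1 : F) =
        c⁻¹ • Matrix.diagonal (fun j => ∏ i ∈ t, (θ j - θ i)) := by
      ext a b
      by_cases hab : a = b
      · subst hab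
        by_cases ha : a = 0
        · subst ha
          simp [Matrix.single, Matrix.diagonal_apply_eq, ← hc,
            inv_mul_cancel₀ hcne]
        · have hz : ∏ i ∈ t, (θ a - θ i) = 0 :=
            Finset.prod_eq_zero (Finset.mem_erase.mpr ⟨ha, Finset.mem_univ _⟩) (sub_self _)
          simp [Matrix.single, Matrix.diagonal_apply_eq, hz, Ne.symm ha]
      · have hne : ¬((0 : Fin (d+1)) = a ∧ (0 : Fin (d+1)) = b) := by
          rintro ⟨rfl, rfl⟩; exact hab rfl
        simp [Matrix.single, Matrix.diagonal_apply_ne _ hab, hne]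
    rw [key]
    exact S.smul_mem (hdiagprod t) _
  -- column expansion identity
  have hMsum : ∀ k : ℕ, A ^ k * Matrix.single (0 : Fin (d+1)) 0 (1 : F) =
      ∑ m : Fin (d+1), Matrix.single m (0 : Fin (d+1)) ((A ^ k) m 0) := by
    intro k
    ext a b
    simp only [Matrix.mul_apply, Matrix.single, Matrix.of_apply, Finset.sum_apply,
      Matrix.sum_apply]
    by_cases hb : b = 0
    · subst hb
      simp [Finset.sum_ite_eq, Finset.sum_ite_eq']
    · simp [Ne.symm hb, hb]
  have hNsum : ∀ k : ℕ, Matrix.single (0 : Fin (d+1)) 0 (1 : F) * A ^ k =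
      ∑ m : Fin (d+1), Matrix.single (0 : Fin (d+1)) m ((A ^ k) 0 m) := by
    intro k
    ext a b
    simp only [Matrix.mul_apply, Matrix.single, Matrix.of_apply, Finset.sum_apply,
      Matrix.sum_apply]
    by_cases ha : a = 0
    · subst ha
      simp [Finset.sum_ite_eq, Finset.sum_ite_eq']
    · simp [Ne.symm ha, ha]
  -- transpose facts
  have htriT : ∀ i j : Fin (d + 1), 1 < ((i : ℤ) - (j : ℤ)).natAbs → A.transpose i j = 0 := by
    intro i j h
    exact htri j i (by omega)
  have hirrT : ∀ i j : Fin (d + 1), ((i : ℤ) - (j : ℤ)).natAbs = 1 → A.transpose i j ≠ 0 := by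
    intro i j h
    exact hirr j i (by omega)
  have hrow0 : ∀ (k : ℕ) (j : Fin (d+1)), k < (j : ℕ) → (A ^ k) 0 j = 0 := by
    intro k j hj
    have := (aux_col A.transpose htriT hirrT k).1 j hj
    rwa [← Matrix.transpose_pow, Matrix.transpose_apply] at this
  have hrownz : ∀ j : Fin (d+1), (A ^ (j : ℕ)) 0 j ≠ 0 := by
    intro j
    have := (aux_col A.transpose htriT hirrT (j : ℕ)).2 j rfl
    rwa [← Matrix.transpose_pow, Matrix.transpose_apply] at this
  -- columns in S
  have hcolS : ∀ j : Fin (d+1), Matrix.single j (0 : Fin (d+1)) (1 : F) ∈ S := by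
    suffices H : ∀ n : ℕ, ∀ j : Fin (d+1), (j : ℕ) = n →
        Matrix.single j (0 : Fin (d+1)) (1 : F) ∈ S by
      intro j; exact H _ j rfl
    intro n
    induction n using Nat.strong_induction_on with
    | _ n IHn =>
      intro j hj
      have hMmem : A ^ (j : ℕ) * Matrix.single (0 : Fin (d+1)) 0 (1 : F) ∈ S :=
        mul_mem (pow_mem hAS _) hE
      rw [hMsum] at hMmem
      have hsplit := Finset.add_sum_erase Finset.univ
        (fun m => Matrix.single m (0 : Fin (d+1)) ((A ^ (j:ℕ)) m 0))
        (Finset.mem_univ j)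
      have herase : ∑ m ∈ Finset.univ.erase j,
          Matrix.single m (0 : Fin (d+1)) ((A ^ (j:ℕ)) m 0) ∈ S := by
        apply Subalgebra.sum_mem
        intro m hm
        have hmj : m ≠ j := (Finset.mem_erase.mp hm).1
        rcases lt_trichotomy (m : ℕ) (j : ℕ) with h | h | h
        · have : Matrix.single m (0 : Fin (d+1)) ((A ^ (j:ℕ)) m 0) =
              ((A ^ (j:ℕ)) m 0) • Matrix.single m (0 : Fin (d+1)) (1 : F) := by
            rw [Matrix.smul_single, smul_eq_mul, mul_one]
          rw [this]
          exact S.smul_mem (IHn _ (hj ▸ h) m rfl) _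
        · exact absurd (Fin.ext h) hmj
        · rw [(aux_col A htri hirr (j : ℕ)).1 m h]
          simp only [Matrix.single_zero]
          exact S.zero_mem
      have hkey : Matrix.single j (0 : Fin (d+1)) ((A ^ (j:ℕ)) j 0) ∈ S := by
        have : Matrix.single j (0 : Fin (d+1)) ((A ^ (j:ℕ)) j 0) =
            (∑ m : Fin (d+1), Matrix.single m (0 : Fin (d+1)) ((A ^ (j:ℕ)) m 0)) -
            ∑ m ∈ Finset.univ.erase j,
              Matrix.single m (0 : Fin (d+1)) ((A ^ (j:ℕ)) m 0) := by
          rw [← hsplit]; exact (add_sub_cancel_right _ _).symm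
        rw [this]
        exact sub_mem hMmem herase
      have hnz : (A ^ (j:ℕ)) j 0 ≠ 0 := (aux_col A htri hirr (j : ℕ)).2 j rfl
      have : Matrix.single j (0 : Fin (d+1)) (1 : F) =
          ((A ^ (j:ℕ)) j 0)⁻¹ • Matrix.single j (0 : Fin (d+1)) ((A ^ (j:ℕ)) j 0) := by
        rw [Matrix.smul_single, smul_eq_mul, inv_mul_cancel₀ hnz]
      rw [this]
      exact S.smul_mem hkey _
  -- rows in S
  have hrowS : ∀ j : Fin (d+1), Matrix.single (0 : Fin (d+1)) j (1 : F) ∈ S := by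
    suffices H : ∀ n : ℕ, ∀ j : Fin (d+1), (j : ℕ) = n →
        Matrix.single (0 : Fin (d+1)) j (1 : F) ∈ S by
      intro j; exact H _ j rfl
    intro n
    induction n using Nat.strong_induction_on with
    | _ n IHn =>
      intro j hj
      have hMmem : Matrix.single (0 : Fin (d+1)) 0 (1 : F) * A ^ (j : ℕ) ∈ S :=
        mul_mem hE (pow_mem hAS _)
      rw [hNsum] at hMmem
      have hsplit := Finset.add_sum_erase Finset.univ
        (fun m => Matrix.single (0 : Fin (d+1)) m ((A ^ (j:ℕ)) 0 m))
        (Finset.mem_univ j)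
      have herase : ∑ m ∈ Finset.univ.erase j,
          Matrix.single (0 : Fin (d+1)) m ((A ^ (j:ℕ)) 0 m) ∈ S := by
        apply Subalgebra.sum_mem
        intro m hm
        have hmj : m ≠ j := (Finset.mem_erase.mp hm).1
        rcases lt_trichotomy (m : ℕ) (j : ℕ) with h | h | h
        · have : Matrix.single (0 : Fin (d+1)) m ((A ^ (j:ℕ)) 0 m) =
              ((A ^ (j:ℕ)) 0 m) • Matrix.single (0 : Fin (d+1)) m (1 : F) := by
            rw [Matrix.smul_single, smul_eq_mul, mul_one]
          rw [this]
          exact S.smul_mem (IHn _ (hj ▸ h) m rfl) _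
        · exact absurd (Fin.ext h) hmj
        · rw [hrow0 (j : ℕ) m h]
          simp only [Matrix.single_zero]
          exact S.zero_mem
      have hkey : Matrix.single (0 : Fin (d+1)) j ((A ^ (j:ℕ)) 0 j) ∈ S := by
        have : Matrix.single (0 : Fin (d+1)) j ((A ^ (j:ℕ)) 0 j) =
            (∑ m : Fin (d+1), Matrix.single (0 : Fin (d+1)) m ((A ^ (j:ℕ)) 0 m)) -
            ∑ m ∈ Finset.univ.erase j,
              Matrix.single (0 : Fin (d+1)) m ((A ^ (j:ℕ)) 0 m) := by
          rw [← hsplit]; exact (add_sub_cancel_right _ _).symm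
        rw [this]
        exact sub_mem hMmem herase
      have hnz : (A ^ (j:ℕ)) 0 j ≠ 0 := hrownz j
      have : Matrix.single (0 : Fin (d+1)) j (1 : F) =
          ((A ^ (j:ℕ)) 0 j)⁻¹ • Matrix.single (0 : Fin (d+1)) j ((A ^ (j:ℕ)) 0 j) := by
        rw [Matrix.smul_single, smul_eq_mul, inv_mul_cancel₀ hnz]
      rw [this]
      exact S.smul_mem hkey _
  -- part 1
  have h1 : S = ⊤ := by
    rw [eq_top_iff]
    rintro M -
    rw [Matrix.matrix_eq_sum_single M]
    apply Subalgebra.sum_mem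
    intro i _
    apply Subalgebra.sum_mem
    intro j _
    have : Matrix.single i j (M i j) =
        Matrix.single i (0 : Fin (d+1)) (M i j) *
        Matrix.single (0 : Fin (d+1)) j (1 : F) := by
      rw [Matrix.single_mul_single_same, mul_one]
    rw [this]
    apply mul_mem _ (hrowS j)
    have : Matrix.single i (0 : Fin (d+1)) (M i j) =
        (M i j) • Matrix.single i (0 : Fin (d+1)) (1 : F) := by
      rw [Matrix.smul_single, smul_eq_mul, mul_one]
    rw [this]
    exact S.smul_mem (hcolS i) _
  refine ⟨h1, ?_⟩
  rintro ⟨W, hbot, htop, hAW, hDW⟩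
  -- the stabilizer subalgebra
  set T : Subalgebra F (Matrix (Fin (d+1)) (Fin (d+1)) F) :=
    { carrier := {M | ∀ v ∈ W, M.mulVec v ∈ W}
      mul_mem' := by
        intro a b ha hb v hv
        rw [← Matrix.mulVec_mulVec]
        exact ha _ (hb _ hv)
      one_mem' := by
        intro v hv
        simpa [Matrix.one_mulVec] using hv
      add_mem' := by
        intro a b ha hb v hv
        rw [Matrix.add_mulVec]
        exact W.add_mem (ha _ hv) (hb _ hv)
      algebraMap_mem' := by
        intro r v hv
        have : (algebraMap F (Matrix (Fin (d+1)) (Fin (d+1)) F) r).mulVec v = r • v := by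
          rw [Algebra.algebraMap_eq_smul_one, Matrix.smul_mulVec, Matrix.one_mulVec]
        rw [this]
        exact W.smul_mem _ hv } with hT
  have hle : S ≤ T := Algebra.adjoin_le (by
    rintro x hx
    rcases hx with rfl | hx
    · exact hAW
    · rcases hx with rfl
      exact hDW)
  rw [h1] at hle
  have hall : ∀ M : Matrix (Fin (d+1)) (Fin (d+1)) F, ∀ v ∈ W, M.mulVec v ∈ W := by
    intro M
    exact hle (show M ∈ ⊤ from trivial)
  obtain ⟨v, hvW, hvne⟩ := Submodule.exists_mem_ne_zero_of_ne_bot hbot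
  obtain ⟨i, hvi⟩ := Function.ne_iff.mp hvne
  simp only [Pi.zero_apply] at hvi
  apply htop
  rw [eq_top_iff]
  rintro w -
  set M : Matrix (Fin (d+1)) (Fin (d+1)) F :=
    Matrix.of (fun a b => if b = i then w a / v i else 0) with hM
  have hMv : M.mulVec v = w := by
    funext a
    simp only [Matrix.mulVec, dotProduct, hM, Matrix.of_apply]
    rw [Finset.sum_eq_single i]
    · simp [div_mul_cancel₀ _ hvi]
    · intro b _ hb
      simp [hb]
    · intro h; exact absurd (Finset.mem_univ _) h
  rw [← hMv]
  exact hall M v hvW
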